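/- Under the stationary AR(1) process with |ρ| < 1, variance σ²/(1−ρ²) and autocorrelation ρ_k = ρ^k, the ratio SR(q)/SR for q-period returns equals sqrt(q / (1 + (2ρ/(1−ρ))·(1 − (1−ρ^q)/(q(1−ρ))))) for every integer q ≥ 1, provided the denominator inside the square root is positive. -/

import Mathlib

open MeasureTheory ProbabilityTheory Finset

/-- Covariance of two real random variables. -/
noncomputable def cov {Ω : Type*} [MeasurableSpace Ω] (X Y : Ω → ℝ) (μ : Measure Ω) : ℝ :=
  ∫ ω, (X ω - ∫ x, X x ∂μ) * (Y ω - ∫ x, Y x ∂μ) ∂μ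

/-- Correlation of two real random variables. -/
noncomputable def corr {Ω : Type*} [MeasurableSpace Ω] (X Y : Ω → ℝ) (μ : Measure Ω) : ℝ :=
  cov X Y μ / (Real.sqrt (variance X μ) * Real.sqrt (variance Y μ))

lemma l2_mul_integrable {Ω : Type*} [MeasurableSpace Ω] {μ : Measure Ω}
    {f g : Ω → ℝ} (hf : MemLp f 2 μ) (hg : MemLp g 2 μ) :
    Integrable (fun ω => f ω * g ω) μ := by
  have h1 := hf.integrable_sq
  have h2 := hg.integrable_sq
  refine ((h1.add h2).div_const 2).mono' (hf.1.mul hg.1) ?_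
  filter_upwards with ω
  simp only [Pi.add_apply]
  rw [Real.norm_eq_abs, abs_mul]
  nlinarith [abs_nonneg (f ω), abs_nonneg (g ω), sq_abs (f ω), sq_abs (g ω),
    sq_nonneg (|f ω| - |g ω|)]

lemma T_eq (ρ : ℝ) (hρ : ρ ≠ 1) (q : ℕ) :
    ∑ i ∈ range q, ∑ j ∈ range q, ρ ^ ((i : ℤ) - j).natAbs
      = q + 2 * ρ * ((q : ℝ) * (1 - ρ) - (1 - ρ ^ q)) / (1 - ρ) ^ 2 := by
  induction q with
  | zero => simp
  | succ n ih =>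
    rw [Finset.sum_range_succ]
    have e1 : ∀ i ∈ range n, ∑ j ∈ range (n+1), ρ ^ ((i : ℤ) - j).natAbs
        = (∑ j ∈ range n, ρ ^ ((i : ℤ) - j).natAbs) + ρ ^ (n - i) := by
      intro i hi
      rw [Finset.sum_range_succ]
      congr 2
      have : ((i : ℤ) - n).natAbs = n - i := by
        have := Finset.mem_range.mp hi; omega
      rw [this]
    rw [Finset.sum_congr rfl e1, Finset.sum_add_distrib, ih]
    have e2 : ∑ j ∈ range (n+1), ρ ^ (((n:ℤ)) - j).natAbs
        = (∑ j ∈ range n, ρ ^ (n - j)) + 1 := by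
      rw [Finset.sum_range_succ]
      congr 1
      · refine Finset.sum_congr rfl fun j hj => ?_
        congr 1
        have := Finset.mem_range.mp hj; omega
      · simp
    rw [e2]
    have e3 : ∑ i ∈ range n, ρ ^ (n - i) = ∑ i ∈ range n, ρ ^ (i + 1) := by
      rw [← Finset.sum_range_reflect]
      refine Finset.sum_congr rfl fun j hj => ?_
      congr 1
      have := Finset.mem_range.mp hj; omega
    have e4 : ∑ i ∈ range n, ρ ^ (i + 1) = ρ * ((ρ ^ n - 1) / (ρ - 1)) := by
      rw [← geom_sum_eq hρ]
      rw [Finset.mul_sum]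
      refine Finset.sum_congr rfl fun j _ => by ring
    rw [e3, e4]
    have h1 : (1 : ℝ) - ρ ≠ 0 := by intro h; apply hρ; linarith
    have h2 : ρ - 1 ≠ 0 := sub_ne_zero.mpr hρ
    push_cast
    field_simp
    ring

theorem sharpe_ratio_q_period_ar1
    {Ω : Type*} [MeasurableSpace Ω] (μ : Measure Ω) [IsProbabilityMeasure μ]
    (R : ℤ → Ω → ℝ) (σ μR Rf ρ : ℝ) (t : ℤ) (q : ℕ) (hq : 1 ≤ q)
    (hL2 : ∀ u : ℤ, MemLp (R u) 2 μ)
    (hσ : 0 < σ) (hρ : |ρ| < 1)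
    (hmean : ∀ u : ℤ, ∫ ω, R u ω ∂μ = μR)
    (hvar : ∀ u : ℤ, variance (R u) μ = σ ^ 2 / (1 - ρ ^ 2))
    (hcorr : ∀ u v : ℤ, corr (R u) (R v) μ = ρ ^ ((v - u).natAbs))
    (hμ : μR ≠ Rf)
    (hpos : 0 < 1 + (2 * ρ / (1 - ρ)) * (1 - (1 - ρ ^ q) / ((q : ℝ) * (1 - ρ)))) :
    ((q : ℝ) * (μR - Rf) / Real.sqrt (variance (fun ω => ∑ i ∈ range q, R (t - i) ω) μ))
        / ((μR - Rf) / Real.sqrt (σ ^ 2 / (1 - ρ ^ 2)))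
      = Real.sqrt ((q : ℝ) /
          (1 + (2 * ρ / (1 - ρ)) * (1 - (1 - ρ ^ q) / ((q : ℝ) * (1 - ρ))))) := by
  have hρ1 : ρ ≠ 1 := by intro h; rw [h] at hρ; simp at hρ
  have h1ρ : (1:ℝ) - ρ ≠ 0 := by intro h; apply hρ1; linarith
  have hρ2 : ρ ^ 2 < 1 := by nlinarith [abs_nonneg ρ, sq_abs ρ, hρ]
  set V : ℝ := σ ^ 2 / (1 - ρ ^ 2) with hVdef
  have hV : 0 < V := div_pos (by positivity) (by linarith)
  set D : ℝ := 1 + (2 * ρ / (1 - ρ)) * (1 - (1 - ρ ^ q) / ((q : ℝ) * (1 - ρ))) with hDdef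
  have hqR : (0:ℝ) < q := by exact_mod_cast hq
  -- covariance formula
  have hcov : ∀ u v : ℤ, cov (R u) (R v) μ = ρ ^ ((v - u).natAbs) * V := by
    intro u v
    have h := hcorr u v
    rw [corr, hvar u, hvar v, Real.mul_self_sqrt hV.le] at h
    field_simp at h
    linarith [h]
  -- variance of the q-period sum
  have hvarS : variance (fun ω => ∑ i ∈ range q, R (t - i) ω) μ
      = V * ∑ i ∈ range q, ∑ j ∈ range q, ρ ^ ((i : ℤ) - j).natAbs := by
    have hS2 : MemLp (fun ω => ∑ i ∈ range q, R (t - i) ω) 2 μ :=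
      memLp_finset_sum (range q) fun i _ => hL2 _
    have hint : ∀ u : ℤ, Integrable (R u) μ := fun u => (hL2 u).integrable one_le_two
    have hES : (∫ ω, ∑ i ∈ range q, R (t - i) ω ∂μ) = q * μR := by
      rw [integral_finset_sum (range q) fun i _ => hint _]
      simp [hmean, Finset.sum_const, Finset.card_range, nsmul_eq_mul]
    rw [variance_eq_integral hS2.1.aemeasurable]
    have hfun : ∀ ω, (((fun ω => ∑ i ∈ range q, R (t - i) ω) : Ω → ℝ)
          - (fun _ => ∫ ω, ∑ i ∈ range q, R (t - i) ω ∂μ : Ω → ℝ)) ω ^ 2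
        = ∑ i ∈ range q, ∑ j ∈ range q, (R (t - i) ω - μR) * (R (t - j) ω - μR) := by
      intro ω
      simp only [Pi.sub_apply, hES]
      rw [show (∑ i ∈ range q, R (t - i) ω) - (q:ℝ) * μR
          = ∑ i ∈ range q, (R (t - i) ω - μR) by
        rw [Finset.sum_sub_distrib]
        simp [Finset.sum_const, Finset.card_range, nsmul_eq_mul]]
      rw [sq, Finset.sum_mul_sum]
    have hmemsub : ∀ u : ℤ, MemLp (fun ω => R u ω - μR) 2 μ := fun u =>
      (hL2 u).sub (memLp_const μR)
    calc (∫ ω, ((((fun ω => ∑ i ∈ range q, R (t - i) ω) : Ω → ℝ)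
            - (fun _ => ∫ ω, ∑ i ∈ range q, R (t - i) ω ∂μ : Ω → ℝ)) ^ (2:ℕ)) ω ∂μ)
        = ∫ ω, ∑ i ∈ range q, ∑ j ∈ range q,
            (R (t - i) ω - μR) * (R (t - j) ω - μR) ∂μ := by
          refine integral_congr_ae (Filter.Eventually.of_forall fun ω => ?_)
          simpa using hfun ω
      _ = ∑ i ∈ range q, ∑ j ∈ range q,
            ∫ ω, (R (t - i) ω - μR) * (R (t - j) ω - μR) ∂μ := by
          rw [integral_finset_sum (range q) fun i _ =>
            integrable_finset_sum (range q) fun j _ =>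
              l2_mul_integrable (hmemsub _) (hmemsub _)]
          exact Finset.sum_congr rfl fun i _ =>
            integral_finset_sum (range q) fun j _ =>
              l2_mul_integrable (hmemsub _) (hmemsub _)
      _ = ∑ i ∈ range q, ∑ j ∈ range q, cov (R (t - i)) (R (t - j)) μ := by
          refine Finset.sum_congr rfl fun i _ => Finset.sum_congr rfl fun j _ => ?_
          rw [cov, hmean, hmean]
      _ = V * ∑ i ∈ range q, ∑ j ∈ range q, ρ ^ ((i : ℤ) - j).natAbs := by
          rw [Finset.mul_sum]
          refine Finset.sum_congr rfl fun i _ => ?_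
          rw [Finset.mul_sum]
          refine Finset.sum_congr rfl fun j _ => ?_
          rw [hcov]
          have : (t - j - (t - i)).natAbs = ((i:ℤ) - j).natAbs := by omega
          rw [this, mul_comm]
  -- the double sum equals q * D
  have hT : (∑ i ∈ range q, ∑ j ∈ range q, ρ ^ ((i : ℤ) - j).natAbs) = q * D := by
    rw [T_eq ρ hρ1 q, hDdef]
    field_simp
  rw [hvarS, hT]
  -- final algebra
  have hqD : 0 < (q:ℝ) * D := mul_pos hqR hpos
  have hsqrt : Real.sqrt (V * ((q:ℝ) * D)) = Real.sqrt V * Real.sqrt ((q:ℝ) * D) :=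
    Real.sqrt_mul hV.le _
  rw [hsqrt]
  have ha : 0 < Real.sqrt V := Real.sqrt_pos.mpr hV
  have hb : 0 < Real.sqrt ((q:ℝ) * D) := Real.sqrt_pos.mpr hqD
  have hc : μR - Rf ≠ 0 := sub_ne_zero.mpr hμ
  have hrhs : Real.sqrt ((q:ℝ) / D) = (q:ℝ) / Real.sqrt ((q:ℝ) * D) := by
    have : (q:ℝ) / D = (q:ℝ) ^ 2 / ((q:ℝ) * D) := by
      field_simp
    rw [this, Real.sqrt_div (by positivity) _, Real.sqrt_sq hqR.le]
  rw [hrhs]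
  rw [div_div_div_eq]
  rw [div_eq_div_iff (by positivity) hb.ne']
  ring
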